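/- Let r : ℕ → ℝ satisfy |r(t)| ≤ 1 for all t and r(t) → 0 as t → ∞. Let c : ℕ → ℝ satisfy ∑_{k} c_k² · k! < ∞, and let k⋆ ≥ 1 be the smallest positive index with c_{k⋆} ≠ 0. Define r_H(t) := ∑_{k ≥ k⋆} c_k² · k! · r(t)^k (the series converges absolutely for each t). Then the function t ↦ |r_H(t)| is summable over ℕ if and only if the function t ↦ |r(t)|^{k⋆} is summable over ℕ. -/

import Mathlib

private lemma tail_summable_aux (c : ℕ → ℝ)
    (hc : Summable fun k => c k ^ 2 * (Nat.factorial k : ℝ)) (m : ℕ) :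
    Summable fun k => c (m + k) ^ 2 * (Nat.factorial (m + k) : ℝ) := by
  exact hc.comp_injective (add_right_injective m)

private lemma aux_bound (c : ℕ → ℝ)
    (hc : Summable fun k => c k ^ 2 * (Nat.factorial k : ℝ))
    (x : ℝ) (hx : |x| ≤ 1) (m : ℕ) :
    Summable (fun k => c (m + k) ^ 2 * (Nat.factorial (m + k) : ℝ) * x ^ (m + k)) ∧
    |∑' k, c (m + k) ^ 2 * (Nat.factorial (m + k) : ℝ) * x ^ (m + k)| ≤
      (∑' k, c (m + k) ^ 2 * (Nat.factorial (m + k) : ℝ)) * |x| ^ m := by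
  set g : ℕ → ℝ := fun k => c (m + k) ^ 2 * (Nat.factorial (m + k) : ℝ) with hg
  have hgsum : Summable g := tail_summable_aux c hc m
  have hgnn : ∀ k, 0 ≤ g k := fun k => by positivity
  set f : ℕ → ℝ := fun k => c (m + k) ^ 2 * (Nat.factorial (m + k) : ℝ) * x ^ (m + k) with hf
  have hfle : ∀ k, |f k| ≤ g k * |x| ^ m := by
    intro k
    have h1 : |f k| = g k * |x| ^ (m + k) := by
      rw [hf, hg]
      rw [abs_mul, abs_pow]
      congr 1
      rw [abs_of_nonneg (by positivity)]
    rw [h1]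
    have h2 : |x| ^ (m + k) ≤ |x| ^ m :=
      pow_le_pow_of_le_one (abs_nonneg x) hx (Nat.le_add_right m k)
    exact mul_le_mul_of_nonneg_left h2 (hgnn k)
  have hgm : Summable fun k => g k * |x| ^ m := hgsum.mul_right _
  have habs : Summable fun k => |f k| :=
    Summable.of_nonneg_of_le (fun k => abs_nonneg _) hfle hgm
  have hfsum : Summable f := habs.of_abs
  refine ⟨hfsum, ?_⟩
  have habs' : Summable fun k => ‖f k‖ := by simpa only [Real.norm_eq_abs] using habs
  have hnorm := norm_tsum_le_tsum_norm habs'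
  simp only [Real.norm_eq_abs] at hnorm
  calc |∑' k, f k| ≤ ∑' k, |f k| := hnorm
    _ ≤ ∑' k, g k * |x| ^ m := Summable.tsum_le_tsum hfle habs hgm
    _ = (∑' k, g k) * |x| ^ m := tsum_mul_right

/-- Summability-equivalence lemma (Step 2 of the proof of Theorem 5): with
`r_H(t) = ∑_{k ≥ k⋆} c_k² k! r(t)^k`, where `k⋆ ≥ 1` is the Hermite rank (the smallest
positive index with `c_{k⋆} ≠ 0`), `∑_t |r_H(t)| < ∞` iff `∑_t |r(t)|^{k⋆} < ∞`. -/
theorem summable_rH_iff_summable_pow_rank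
    (r : ℕ → ℝ) (hr1 : ∀ t, |r t| ≤ 1) (hr0 : Filter.Tendsto r Filter.atTop (nhds 0))
    (c : ℕ → ℝ) (hc : Summable fun k => c k ^ 2 * (Nat.factorial k : ℝ))
    (ks : ℕ) (hks1 : 1 ≤ ks) (hcks : c ks ≠ 0)
    (hmin : ∀ k, 1 ≤ k → k < ks → c k = 0)
    (rH : ℕ → ℝ)
    (hrH : ∀ t, rH t = ∑' k : ℕ, c (ks + k) ^ 2 * (Nat.factorial (ks + k) : ℝ) * r t ^ (ks + k)) :
    (Summable fun t => |rH t|) ↔ Summable fun t => |r t| ^ ks := by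
  set C : ℝ := ∑' k, c (ks + k) ^ 2 * (Nat.factorial (ks + k) : ℝ) with hC
  set C' : ℝ := ∑' k, c (ks + 1 + k) ^ 2 * (Nat.factorial (ks + 1 + k) : ℝ) with hC'
  have hC'nn : 0 ≤ C' := tsum_nonneg fun k => by positivity
  set a : ℝ := c ks ^ 2 * (Nat.factorial ks : ℝ) with ha
  have ha0 : 0 < a := by positivity
  -- upper bound: |rH t| ≤ C * |r t|^ks
  have hub : ∀ t, |rH t| ≤ C * |r t| ^ ks := by
    intro t
    rw [hrH t]
    exact (aux_bound c hc (r t) (hr1 t) ks).2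
  -- lower bound for small |r t|
  have hlb : ∀ t, a * |r t| ^ ks - C' * |r t| * |r t| ^ ks ≤ |rH t| := by
    intro t
    have hsum := (aux_bound c hc (r t) (hr1 t) ks).1
    have hsplit : rH t = a * r t ^ ks +
        ∑' k, c (ks + (k + 1)) ^ 2 * (Nat.factorial (ks + (k + 1)) : ℝ) * r t ^ (ks + (k + 1)) := by
      rw [hrH t, Summable.tsum_eq_zero_add hsum]
      simp [ha]
    have hident : (fun k => c (ks + (k + 1)) ^ 2 * (Nat.factorial (ks + (k + 1)) : ℝ) *
        r t ^ (ks + (k + 1))) = fun k => c (ks + 1 + k) ^ 2 * (Nat.factorial (ks + 1 + k) : ℝ) *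
        r t ^ (ks + 1 + k) := by
      funext k
      have : ks + (k + 1) = ks + 1 + k := by ring
      rw [this]
    rw [hident] at hsplit
    have htail := (aux_bound c hc (r t) (hr1 t) (ks + 1)).2
    have h1 : |a * r t ^ ks| = a * |r t| ^ ks := by
      rw [abs_mul, abs_pow, abs_of_nonneg ha0.le]
    have h2 : |r t| ^ (ks + 1) = |r t| * |r t| ^ ks := by ring
    rw [h2] at htail
    set T : ℝ := ∑' k, c (ks + 1 + k) ^ 2 * (Nat.factorial (ks + 1 + k) : ℝ) *
      r t ^ (ks + 1 + k) with hT
    have h3 : |a * r t ^ ks| - |T| ≤ |a * r t ^ ks + T| := by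
      have := abs_sub_abs_le_abs_sub (a * r t ^ ks) (-T)
      simpa using this
    rw [hsplit, hC']
    rw [h1] at h3
    linarith
  constructor
  · intro h
    -- choose N with |r t| small for t ≥ N
    set δ : ℝ := a / (2 * (C' + 1)) with hδdef
    have hδ : 0 < δ := by positivity
    obtain ⟨N, hN⟩ := Metric.tendsto_atTop.mp hr0 δ hδ
    have hN' : ∀ t, N ≤ t → |r t| < δ := by
      intro t ht
      have := hN t ht
      simpa [Real.dist_eq] using this
    rw [← summable_nat_add_iff N]
    have hsum2 : Summable fun t => (2 / a) * |rH (t + N)| :=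
      (((summable_nat_add_iff N).mpr h)).mul_left _
    refine Summable.of_nonneg_of_le (fun t => by positivity) (fun t => ?_) hsum2
    have ht : N ≤ t + N := Nat.le_add_left N t
    have hr : |r (t + N)| < δ := hN' _ ht
    have key : (a / 2) * |r (t + N)| ^ ks ≤ |rH (t + N)| := by
      have hlow := hlb (t + N)
      have hsmall : C' * |r (t + N)| ≤ a / 2 := by
        have h1 : C' * |r (t + N)| ≤ (C' + 1) * δ := by
          have := abs_nonneg (r (t + N))
          nlinarith
        have h2 : (C' + 1) * δ = a / 2 := by
          rw [hδdef]; field_simp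
        linarith
      nlinarith [pow_nonneg (abs_nonneg (r (t + N))) ks]
    rw [div_mul_eq_mul_div, le_div_iff₀ ha0] at *
    nlinarith [key]
  · intro h
    refine Summable.of_nonneg_of_le (fun t => abs_nonneg _) (fun t => hub t) (h.mul_left C)
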